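/- Let X be a Banach space, N : X → X globally Lipschitz and continuously Fréchet differentiable, generating flows U_t (solving d/dt U_t(a) = N(U_t(a)), U_0(a) = a) and V_t = U_{−t}. Then for any T > 0, a₀ ∈ X, and I ∈ L¹((0,T); X), the solution a of ȧ(t) = N(a(t)) + I(t), a(0) = a₀, satisfies the backward representation a(t) = U_{t−T}( U_T(a₀) + ∫₀^t DU_{T−s}(a(s)) I(s) ds ) for all t ∈ [0,T], where DU_τ(·) denotes the Fréchet derivative of the flow map U_τ. -/

import Mathlib

open Real Filter MeasureTheory intervalIntegral
open Topology

section Aux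

variable {X : Type*} [NormedAddCommGroup X] [NormedSpace ℝ X]

private lemma ode_uniq_global {v : X → X} {K : NNReal} (hv : LipschitzWith K v) {f g : ℝ → X}
    (hf : ∀ t, HasDerivAt f (v (f t)) t) (hg : ∀ t, HasDerivAt g (v (g t)) t)
    (h0 : f 0 = g 0) : ∀ t, f t = g t := by
  intro t
  have ht : t ∈ Set.Ioo (-(|t| + 1)) (|t| + 1) := by
    constructor
    · nlinarith [neg_abs_le t, abs_nonneg t]
    · nlinarith [le_abs_self t]
  have h0' : (0:ℝ) ∈ Set.Ioo (-(|t| + 1)) (|t| + 1) := by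
    have := abs_nonneg t
    constructor <;> [linarith; linarith]
  exact ODE_solution_unique_of_mem_Ioo (v := fun _ => v) (s := fun _ => Set.univ)
    (fun _ _ => hv.lipschitzOnWith) h0' (fun u _ => ⟨hf u, trivial⟩)
    (fun u _ => ⟨hg u, trivial⟩) h0 ht

private lemma gron_one {v : X → X} {K : NNReal} (hv : LipschitzWith K v) {f g : ℝ → X}
    (hf : ∀ t, HasDerivAt f (v (f t)) t) (hg : ∀ t, HasDerivAt g (v (g t)) t)
    {b : ℝ} (hb : 0 ≤ b) : ‖f b - g b‖ ≤ ‖f 0 - g 0‖ * Real.exp (K * b) := by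
  have H := norm_le_gronwallBound_of_norm_deriv_right_le
    (f := fun t => f t - g t) (f' := fun t => v (f t) - v (g t))
    (δ := ‖f 0 - g 0‖) (K := (K : ℝ)) (ε := 0) (a := 0) (b := b)
    (Continuous.continuousOn (continuous_iff_continuousAt.2 fun u =>
      ((hf u).continuousAt.sub (hg u).continuousAt)))
    (fun x _ => ((hf x).sub (hg x)).hasDerivWithinAt)
    le_rfl
    (by
      intro x _
      rw [add_zero]
      have := hv.dist_le_mul (f x) (g x)
      rwa [dist_eq_norm, dist_eq_norm] at this)
  have := H b ⟨hb, le_rfl⟩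
  rwa [sub_zero, gronwallBound_ε0] at this

private lemma gron_two {v : X → X} {K : NNReal} (hv : LipschitzWith K v) {f g : ℝ → X}
    (hf : ∀ t, HasDerivAt f (v (f t)) t) (hg : ∀ t, HasDerivAt g (v (g t)) t)
    {b : ℝ} (hb : 0 ≤ b) :
    ‖f b - g b - (f 0 - g 0)‖ ≤ ((K : ℝ) * Real.exp (K * b) * ‖f 0 - g 0‖) * b := by
  have H := norm_le_gronwallBound_of_norm_deriv_right_le
    (f := fun t => f t - g t - (f 0 - g 0)) (f' := fun t => v (f t) - v (g t))
    (δ := 0) (K := 0) (ε := (K : ℝ) * Real.exp (K * b) * ‖f 0 - g 0‖) (a := 0) (b := b)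
    (Continuous.continuousOn (continuous_iff_continuousAt.2 fun u =>
      (((hf u).continuousAt.sub (hg u).continuousAt).sub continuousAt_const)))
    (fun x _ => (((hf x).sub (hg x)).sub_const _).hasDerivWithinAt)
    (by simp)
    (by
      intro x hx
      rw [zero_mul, zero_add]
      have h1 : ‖v (f x) - v (g x)‖ ≤ (K : ℝ) * ‖f x - g x‖ := by
        have := hv.dist_le_mul (f x) (g x)
        rwa [dist_eq_norm, dist_eq_norm] at this
      have h2 : ‖f x - g x‖ ≤ ‖f 0 - g 0‖ * Real.exp (K * x) :=
        gron_one hv hf hg hx.1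
      have h3 : Real.exp ((K : ℝ) * x) ≤ Real.exp ((K : ℝ) * b) :=
        Real.exp_le_exp.2 (mul_le_mul_of_nonneg_left hx.2.le K.coe_nonneg)
      calc ‖v (f x) - v (g x)‖ ≤ (K : ℝ) * ‖f x - g x‖ := h1
        _ ≤ (K : ℝ) * (‖f 0 - g 0‖ * Real.exp (K * x)) :=
            mul_le_mul_of_nonneg_left h2 K.coe_nonneg
        _ ≤ (K : ℝ) * Real.exp (K * b) * ‖f 0 - g 0‖ := by
            have h4 : ‖f 0 - g 0‖ * Real.exp ((K:ℝ) * x) ≤ ‖f 0 - g 0‖ * Real.exp ((K:ℝ) * b) :=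
              mul_le_mul_of_nonneg_left h3 (norm_nonneg _)
            nlinarith [K.coe_nonneg])
  have := H b ⟨hb, le_rfl⟩
  rw [gronwallBound_K0] at this
  simpa using this

private lemma flowE {N : X → X} {K : NNReal} (hNlip : LipschitzWith K N)
    {U : ℝ → X → X} (hU0 : ∀ x, U 0 x = x)
    (hUflow : ∀ (x : X) (t : ℝ), HasDerivAt (fun s => U s x) (N (U t x)) t)
    (s : ℝ) (p q : X) :
    ‖U s p - U s q - (p - q)‖ ≤ ((K : ℝ) * Real.exp (K * |s|) * ‖p - q‖) * |s| := by
  rcases le_or_gt 0 s with hs | hs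
  · have := gron_two hNlip (fun t => hUflow p t) (fun t => hUflow q t) hs
    simpa [hU0, abs_of_nonneg hs] using this
  · have hneg : LipschitzWith K (fun x : X => -N x) := by
      have := hNlip.neg
      simpa [Pi.neg_def] using this
    have hfp : ∀ (y : X) (t : ℝ), HasDerivAt (fun u => U (-u) y) (-N (U (-t) y)) t := by
      intro y t
      have h1 : HasDerivAt (fun s => U s y) (N (U (-t) y)) ((0:ℝ) - t) := by
        rw [zero_sub]; exact hUflow y (-t)
      have h2 := h1.comp_const_sub 0 t
      simpa [zero_sub] using h2
    have := gron_two hneg (f := fun u => U (-u) p) (g := fun u => U (-u) q)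
      (fun t => hfp p t) (fun t => hfp q t) (b := -s) (by linarith)
    simpa [hU0, abs_of_neg hs] using this

private lemma flowGrp {N : X → X} {K : NNReal} (hNlip : LipschitzWith K N)
    {U : ℝ → X → X} (hU0 : ∀ x, U 0 x = x)
    (hUflow : ∀ (x : X) (t : ℝ), HasDerivAt (fun s => U s x) (N (U t x)) t)
    (s t : ℝ) (x : X) : U s (U t x) = U (s + t) x := by
  have hg : ∀ u : ℝ, HasDerivAt (fun u => U (u + t) x) (N (U (u + t) x)) u := fun u =>
    (hUflow x (u + t)).comp_add_const u t
  have h0 : U 0 (U t x) = U (0 + t) x := by rw [hU0, zero_add]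
  exact ode_uniq_global hNlip (fun u => hUflow (U t x) u) hg h0 s

end Aux

/-- Backward representation of the solution of `ȧ = N(a) + I(t)`:
`a(t) = U_{t-T}(U_T(a₀) + ∫₀ᵗ DU_{T-s}(a(s)) I(s) ds)` for `t ∈ [0,T]`, where `U` is
the flow of the globally Lipschitz `C¹` drift `N` and `DU_τ(·)` is its Fréchet
derivative in the state. -/
theorem stmt13 {X : Type*} [NormedAddCommGroup X] [NormedSpace ℝ X] [CompleteSpace X]
    (N : X → X) (K : NNReal) (hNlip : LipschitzWith K N) (hNC1 : ContDiff ℝ 1 N)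
    (U : ℝ → X → X)
    (hU0 : ∀ x, U 0 x = x)
    (hUflow : ∀ (x : X) (t : ℝ), HasDerivAt (fun s => U s x) (N (U t x)) t)
    (DU : ℝ → X → (X →L[ℝ] X))
    (hDU : ∀ (t : ℝ) (x : X), HasFDerivAt (U t) (DU t x) x)
    (T : ℝ) (hT : 0 < T) (a₀ : X) (I : ℝ → X) (a : ℝ → X)
    (ha0 : a 0 = a₀)
    (hode : ∀ t ∈ Set.Icc (0 : ℝ) T, HasDerivAt a (N (a t) + I t) t)
    (hI : IntervalIntegrable I volume 0 T)
    (hint : IntervalIntegrable (fun s => (DU (T - s) (a s)) (I s)) volume 0 T) :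
    ∀ t ∈ Set.Icc (0 : ℝ) T,
      a t = U (t - T) (U T a₀ + ∫ s in (0 : ℝ)..t, (DU (T - s) (a s)) (I s)) := by
  have grp := flowGrp hNlip hU0 hUflow
  set b : ℝ → X := fun τ => U (T - τ) (a τ) with hbdef
  -- derivative of b at every point of [0, T]
  have hbderiv : ∀ τ ∈ Set.Icc (0:ℝ) T, HasDerivAt b ((DU (T - τ) (a τ)) (I τ)) τ := by
    intro τ hτ
    set D := DU (T - τ) (a τ) with hDdef
    set P : ℝ → X := fun h => U (T - τ) (a (τ + h)) with hPdef
    set Q : ℝ → X := fun h => U (T - τ) (U h (a τ)) with hQdef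
    set E : ℝ → X := fun h => U (-h) (P h) - U (-h) (Q h) - (P h - Q h) with hEdef
    have key : ∀ h, b (τ + h) = (P h - Q h) + E h + b τ := by
      intro h
      have e1 : U (-h) (P h) = b (τ + h) := by
        show U (-h) (U (T - τ) (a (τ + h))) = U (T - (τ + h)) (a (τ + h))
        rw [grp (-h) (T - τ) (a (τ + h))]
        congr 1
        ring
      have e2 : U (-h) (Q h) = b τ := by
        show U (-h) (U (T - τ) (U h (a τ))) = U (T - τ) (a τ)
        rw [grp (-h) (T - τ) (U h (a τ)), grp (-h + (T - τ)) h (a τ)]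
        congr 1
        ring
      show b (τ + h) = (P h - Q h) + (U (-h) (P h) - U (-h) (Q h) - (P h - Q h)) + b τ
      rw [e1, e2]
      abel
    have hP' : HasDerivAt P (D (N (a τ) + I τ)) 0 := by
      have h1 : HasDerivAt (fun h : ℝ => a (τ + h)) (N (a τ) + I τ) 0 := by
        have h2 : HasDerivAt a (N (a τ) + I τ) (τ + 0) := by
          rw [add_zero]; exact hode τ hτ
        exact h2.comp_const_add τ 0
      have h2 : HasFDerivAt (U (T - τ)) D ((fun h : ℝ => a (τ + h)) 0) := by
        simpa using hDU (T - τ) (a τ)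
      exact h2.comp_hasDerivAt 0 h1
    have hQ' : HasDerivAt Q (D (N (a τ))) 0 := by
      have h1 : HasDerivAt (fun h : ℝ => U h (a τ)) (N (a τ)) 0 := by
        have := hUflow (a τ) 0
        rwa [hU0] at this
      have h2 : HasFDerivAt (U (T - τ)) D ((fun h : ℝ => U h (a τ)) 0) := by
        simpa [hU0] using hDU (T - τ) (a τ)
      exact h2.comp_hasDerivAt 0 h1
    have hPQ : HasDerivAt (fun h => P h - Q h) (D (I τ)) 0 := by
      have := hP'.sub hQ'
      simp only [map_add, add_sub_cancel_left] at this
      exact this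
    have hPQ0 : P 0 - Q 0 = 0 := by
      show U (T - τ) (a (τ + 0)) - U (T - τ) (U 0 (a τ)) = 0
      rw [add_zero, hU0, sub_self]
    have hE' : HasDerivAt E 0 0 := by
      have hE0 : E 0 = 0 := by
        show U (-0) (P 0) - U (-0) (Q 0) - (P 0 - Q 0) = 0
        rw [neg_zero, hU0, hU0, hPQ0]
        abel
      rw [hasDerivAt_iff_isLittleO]
      simp only [hE0, sub_zero, smul_zero]
      rw [Asymptotics.isLittleO_iff]
      intro c hc
      have hcoef : Filter.Tendsto (fun h : ℝ => (K:ℝ) * Real.exp (K * |h|) * ‖P h - Q h‖)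
          (𝓝 0) (𝓝 ((K:ℝ) * Real.exp (K * |(0:ℝ)|) * ‖P 0 - Q 0‖)) := by
        apply ContinuousAt.tendsto
        exact (continuousAt_const.mul ((Real.continuous_exp.continuousAt).comp
          ((continuous_const.mul continuous_abs).continuousAt))).mul
          ((hP'.continuousAt.sub hQ'.continuousAt).norm)
      have hval : (K:ℝ) * Real.exp (K * |(0:ℝ)|) * ‖P 0 - Q 0‖ = 0 := by
        rw [hPQ0]; simp
      rw [hval] at hcoef
      filter_upwards [hcoef.eventually_lt_const hc] with h hh
      have hEb : ‖E h‖ ≤ ((K:ℝ) * Real.exp (K * |h|) * ‖P h - Q h‖) * |h| := by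
        have := flowE hNlip hU0 hUflow (-h) (P h) (Q h)
        simpa [abs_neg] using this
      calc ‖E h‖ ≤ ((K:ℝ) * Real.exp (K * |h|) * ‖P h - Q h‖) * |h| := hEb
        _ ≤ c * ‖h‖ := by
            rw [Real.norm_eq_abs]
            exact mul_le_mul_of_nonneg_right hh.le (abs_nonneg h)
    have hsum : HasDerivAt (fun h => (P h - Q h) + E h + b τ) (D (I τ)) 0 := by
      simpa using (hPQ.add hE').add_const (b τ)
    have hshift : HasDerivAt (fun h => b (τ + h)) (D (I τ)) 0 := by
      have : (fun h => b (τ + h)) = fun h => (P h - Q h) + E h + b τ := funext key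
      rw [this]; exact hsum
    have h6 : HasDerivAt (fun h => b (τ + h)) (D (I τ)) (τ - τ) := by
      rwa [sub_self]
    have h7 := h6.comp_sub_const τ τ
    have h8 : (fun σ : ℝ => b (τ + (σ - τ))) = b := funext fun σ => by
      congr 1
      ring
    rw [h8] at h7
    exact h7
  -- FTC
  intro t ht
  have huIcc : Set.uIcc (0:ℝ) t = Set.Icc 0 t := Set.uIcc_of_le ht.1
  have hftc : (∫ s in (0:ℝ)..t, (DU (T - s) (a s)) (I s)) = b t - b 0 := by
    apply intervalIntegral.integral_eq_sub_of_hasDerivAt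
    · intro s hs
      rw [huIcc] at hs
      exact hbderiv s ⟨hs.1, hs.2.trans ht.2⟩
    · refine hint.mono_set ?_
      rw [huIcc, Set.uIcc_of_le hT.le]
      exact Set.Icc_subset_Icc_right ht.2
  have hb0 : b 0 = U T a₀ := by
    show U (T - 0) (a 0) = U T a₀
    rw [sub_zero, ha0]
  have hsumval : U T a₀ + (∫ s in (0:ℝ)..t, (DU (T - s) (a s)) (I s)) = b t := by
    rw [hftc, hb0]; abel
  rw [hsumval]
  show a t = U (t - T) (U (T - t) (a t))
  rw [grp (t - T) (T - t) (a t)]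
  have : t - T + (T - t) = 0 := by ring
  rw [this, hU0]
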